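/- arXiv:1611.06031 — 5 statements merged into one kernel-verified Lean document; each statement's English description precedes it below -/
import Mathlib

section
/- For all integers n ≥ 2 and k ≥ ⌈n/3⌉ + 1, the complete bipartite graph K_{2,n} admits an equitable proper k-coloring; moreover, K_{2,n} has no equitable proper coloring with exactly ⌈n/3⌉ colors. Hence the equitable chromatic threshold of K_{2,n} equals ⌈n/3⌉ + 1. -/
open Finset


lemma card_mod_count (n r t : ℕ) (hr : 0 < r) (ht : t < r) :
    ((univ : Finset (Fin n)).filter (fun j : Fin n => (j : ℕ) % r = t)).card
      = n / r + if t < n % r then 1 else 0 := by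
  have h := Nat.count_modEq_card (b := n) hr t
  rw [Nat.count_eq_card_filter_range, Nat.mod_eq_of_lt ht] at h
  have hset : (range n).filter (fun j => j ≡ t [MOD r])
      = (range n).filter (fun j => j % r = t) := by
    ext x; simp [Nat.ModEq, Nat.mod_eq_of_lt ht]
  rw [hset] at h
  rw [← h]
  apply Finset.card_bij (fun (a : Fin n) _ => (a : ℕ))
  · intro a ha; simp at ha ⊢; exact ha
  · intro a _ b _ hab; exact Fin.val_injective hab
  · intro x hx; simp at hx; exact ⟨⟨x, hx.1⟩, by simp [hx.2], rfl⟩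

lemma card_filter_sum_type {α β : Type*} [Fintype α] [Fintype β] (p : α ⊕ β → Prop) [DecidablePred p] :
    ((univ : Finset (α ⊕ β)).filter p).card
      = ((univ : Finset α).filter fun a => p (Sum.inl a)).card
        + ((univ : Finset β).filter fun b => p (Sum.inr b)).card := by
  rw [← Finset.card_toLeft_add_card_toRight]
  congr 1 <;> (congr 1; ext x; simp)

def col1 (n k : ℕ) (hk : 2 ≤ k) : Fin 2 ⊕ Fin n → Fin k := fun v =>
  match v with
  | .inl _ => ⟨0, by omega⟩
  | .inr j => ⟨1 + (j : ℕ) % (k - 1),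
      by have := Nat.mod_lt (j : ℕ) (show 0 < k - 1 by omega); omega⟩

def col2 (n k : ℕ) (hk : n + 2 ≤ k) : Fin 2 ⊕ Fin n → Fin k := fun v =>
  match v with
  | .inl a => ⟨(a : ℕ), by have := a.isLt; omega⟩
  | .inr j => ⟨2 + (j : ℕ), by have := j.isLt; omega⟩

lemma partA (n : ℕ) (hn : 2 ≤ n) : ∀ k : ℕ, (n + 2) / 3 + 1 ≤ k →
    ∃ f : Fin 2 ⊕ Fin n → Fin k,
      (∀ u v, (completeBipartiteGraph (Fin 2) (Fin n)).Adj u v → f u ≠ f v) ∧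
      (∀ i j : Fin k,
        (univ.filter fun v => f v = i).card ≤ (univ.filter fun v => f v = j).card + 1) := by
  intro k hk
  by_cases hkn : k ≤ n + 1
  · have hk2 : 2 ≤ k := by omega
    have hr : 0 < k - 1 := by omega
    have hrn : k - 1 ≤ n := by omega
    have h3r : n ≤ (k - 1) * 3 := by omega
    refine ⟨col1 n k hk2, ?_, ?_⟩
    · rintro (a | b) (a' | b') hadj <;> simp at hadj <;> intro h <;>
        have hv := congrArg Fin.val h <;> simp [col1] at hv <;> omega
    · have hq1 : 1 ≤ n / (k - 1) := (Nat.one_le_div_iff hr).mpr hrn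
      have hq3 : n / (k - 1) ≤ 3 := by
        calc n / (k - 1) ≤ (k - 1) * 3 / (k - 1) := Nat.div_le_div_right h3r
          _ = 3 := Nat.mul_div_cancel_left _ hr
      have hq2 : n % (k - 1) = 0 ∨ n / (k - 1) ≤ 2 := by
        by_cases hs : n % (k - 1) = 0
        · exact Or.inl hs
        · right
          have hne : n ≠ (k - 1) * 3 := by
            intro h; apply hs; rw [h]; exact Nat.mul_mod_right (k - 1) 3
          have : n / (k - 1) < 3 := (Nat.div_lt_iff_lt_mul hr).mpr (by omega)
          omega
      have hcard : ∀ i : Fin k,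
          ((univ : Finset (Fin 2 ⊕ Fin n)).filter fun v => col1 n k hk2 v = i).card
            = if (i : ℕ) = 0 then 2
              else n / (k - 1) + if (i : ℕ) - 1 < n % (k - 1) then 1 else 0 := by
        rintro ⟨iv, hivlt⟩
        rw [card_filter_sum_type]
        by_cases hi : iv = 0
        · subst hi
          have e1 : ((univ : Finset (Fin 2)).filter
              fun a => col1 n k hk2 (Sum.inl a) = (⟨0, hivlt⟩ : Fin k)) = univ :=
            Finset.filter_eq_self.mpr (fun a _ => by simp [col1])
          have e2 : ((univ : Finset (Fin n)).filter
              fun b => col1 n k hk2 (Sum.inr b) = (⟨0, hivlt⟩ : Fin k)) = ∅ :=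
            Finset.filter_eq_empty_iff.mpr (fun b _ => by simp [col1, Fin.ext_iff])
          rw [e1, e2]; simp
        · have e1 : ((univ : Finset (Fin 2)).filter
              fun a => col1 n k hk2 (Sum.inl a) = (⟨iv, hivlt⟩ : Fin k)) = ∅ :=
            Finset.filter_eq_empty_iff.mpr (fun a _ => by simp [col1, Fin.ext_iff]; omega)
          have e2 : ((univ : Finset (Fin n)).filter
              fun b => col1 n k hk2 (Sum.inr b) = (⟨iv, hivlt⟩ : Fin k))
              = (univ : Finset (Fin n)).filter fun b : Fin n => (b : ℕ) % (k - 1) = iv - 1 := by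
            apply filter_congr; intro b _
            simp only [col1, Fin.ext_iff]
            constructor <;> (intro hx; omega)
          rw [e1, e2, card_mod_count n (k - 1) _ hr (by omega)]
          simp [hi]
      intro i j
      rw [hcard i, hcard j]
      split_ifs <;> omega
  · have hk2 : n + 2 ≤ k := by omega
    refine ⟨col2 n k hk2, ?_, ?_⟩
    · rintro (a | b) (a' | b') hadj <;> simp at hadj <;> intro h <;>
        have hv := congrArg Fin.val h <;>
        simp [col2] at hv <;>
        first
          | (have := a.isLt; omega)
          | (have := a'.isLt; omega)
    · have h1 : ∀ i : Fin k,
          ((univ : Finset (Fin 2 ⊕ Fin n)).filter fun v => col2 n k hk2 v = i).card ≤ 1 := by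
        intro i
        rw [Finset.card_le_one]
        rintro (a | b) ha (a' | b') hb <;> simp [mem_filter] at ha hb <;>
          rw [← hb] at ha <;> have hv := congrArg Fin.val ha <;> simp [col2] at hv
        · exact congrArg Sum.inl (Fin.ext hv)
        · have := a.isLt; omega
        · have := a'.isLt; omega
        · exact congrArg Sum.inr (Fin.ext (by omega))
      intro i j
      have := h1 i
      omega


lemma partB (n : ℕ) (hn : 2 ≤ n) :
    ¬ ∃ f : Fin 2 ⊕ Fin n → Fin ((n + 2) / 3),
        (∀ u v, (completeBipartiteGraph (Fin 2) (Fin n)).Adj u v → f u ≠ f v) ∧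
        (∀ i j : Fin ((n + 2) / 3),
          (univ.filter fun v => f v = i).card ≤ (univ.filter fun v => f v = j).card + 1) := by
  rintro ⟨f, hp, he⟩
  have hm1 : 1 ≤ (n + 2) / 3 := by omega
  have key : ∀ (a : Fin 2) (b : Fin n), f (Sum.inr b) ≠ f (Sum.inl a) := by
    intro a b h
    exact hp (Sum.inl a) (Sum.inr b) (by simp) h.symm
  have hsum : (n + 2) = ∑ i : Fin ((n + 2) / 3), (univ.filter fun v => f v = i).card := by
    have h := Finset.card_eq_sum_card_fiberwise
      (s := (univ : Finset (Fin 2 ⊕ Fin n))) (t := univ) (f := f) (fun x _ => mem_univ _)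
    rw [← h]
    simp [Fintype.card_sum]; omega
  by_cases hcc : f (Sum.inl 0) = f (Sum.inl 1)
  · -- both left vertices share a color; that class has ≤ 2 elements
    set c1 := f (Sum.inl 0) with hc1
    have h2 : (univ.filter fun v => f v = c1).card ≤ 2 := by
      have hsub : (univ.filter fun v => f v = c1) ⊆ {Sum.inl 0, Sum.inl 1} := by
        rintro (a | b) hv <;> simp only [mem_filter] at hv
        · simp only [mem_insert, mem_singleton]
          fin_cases a <;> simp
        · exact absurd hv.2 (key 0 b)
      calc (univ.filter fun v => f v = c1).card
          ≤ ({Sum.inl 0, Sum.inl 1} : Finset (Fin 2 ⊕ Fin n)).card := card_le_card hsub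
        _ ≤ 2 := (card_insert_le _ _).trans (by simp)
    have h3 : ∀ i, (univ.filter fun v => f v = i).card ≤ 3 := by
      intro i
      have := he i c1
      omega
    have hsplit : (univ.filter fun v => f v = c1).card
        + ∑ i ∈ univ.erase c1, (univ.filter fun v => f v = i).card
        = ∑ i : Fin ((n + 2) / 3), (univ.filter fun v => f v = i).card :=
      Finset.add_sum_erase univ (fun i => (univ.filter fun v => f v = i).card) (mem_univ c1)
    have hbound : ∑ i ∈ univ.erase c1, (univ.filter fun v => f v = i).card
        ≤ (univ.erase c1).card * 3 := by
      have := Finset.sum_le_card_nsmul (univ.erase c1)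
        (fun i => (univ.filter fun v => f v = i).card) 3 (fun i _ => h3 i)
      simpa using this
    have hce : (univ.erase c1).card = (n + 2) / 3 - 1 := by
      rw [card_erase_of_mem (mem_univ _)]; simp
    rw [hce] at hbound
    omega
  · -- the two left vertices have distinct colors; those classes have ≤ 1 element each
    set c1 := f (Sum.inl 0) with hc1
    set c2 := f (Sum.inl 1) with hc2
    have hb1 : (univ.filter fun v => f v = c1).card ≤ 1 := by
      have hsub : (univ.filter fun v => f v = c1) ⊆ {Sum.inl 0} := by
        rintro (a | b) hv <;> simp only [mem_filter] at hv
        · fin_cases a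
          · exact mem_singleton_self _
          · exact absurd hv.2 (fun h => hcc h.symm)
        · exact absurd hv.2 (key 0 b)
      exact (card_le_card hsub).trans (by simp)
    have hb2 : (univ.filter fun v => f v = c2).card ≤ 1 := by
      have hsub : (univ.filter fun v => f v = c2) ⊆ {Sum.inl 1} := by
        rintro (a | b) hv <;> simp only [mem_filter] at hv
        · fin_cases a
          · exact absurd hv.2 hcc
          · exact mem_singleton_self _
        · exact absurd hv.2 (key 1 b)
      exact (card_le_card hsub).trans (by simp)
    have h2 : ∀ i, (univ.filter fun v => f v = i).card ≤ 2 := by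
      intro i
      have := he i c1
      omega
    have hmem2 : c2 ∈ univ.erase c1 := mem_erase.mpr ⟨fun h => hcc h.symm, mem_univ _⟩
    have hsplit1 : (univ.filter fun v => f v = c1).card
        + ∑ i ∈ univ.erase c1, (univ.filter fun v => f v = i).card
        = ∑ i : Fin ((n + 2) / 3), (univ.filter fun v => f v = i).card :=
      Finset.add_sum_erase univ (fun i => (univ.filter fun v => f v = i).card) (mem_univ c1)
    have hsplit2 : (univ.filter fun v => f v = c2).card
        + ∑ i ∈ (univ.erase c1).erase c2, (univ.filter fun v => f v = i).card
        = ∑ i ∈ univ.erase c1, (univ.filter fun v => f v = i).card :=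
      Finset.add_sum_erase (univ.erase c1)
        (fun i => (univ.filter fun v => f v = i).card) hmem2
    have hbound : ∑ i ∈ (univ.erase c1).erase c2, (univ.filter fun v => f v = i).card
        ≤ ((univ.erase c1).erase c2).card * 2 := by
      have := Finset.sum_le_card_nsmul ((univ.erase c1).erase c2)
        (fun i => (univ.filter fun v => f v = i).card) 2 (fun i _ => h2 i)
      simpa using this
    have hce : ((univ.erase c1).erase c2).card = (n + 2) / 3 - 2 := by
      rw [card_erase_of_mem hmem2, card_erase_of_mem (mem_univ _)]
      simp only [card_univ, Fintype.card_fin]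
      omega
    rw [hce] at hbound
    have hm2 : 2 ≤ (n + 2) / 3 := by
      by_contra hlt
      have h1' : (n + 2) / 3 = 1 := by omega
      have := c1.isLt
      have := c2.isLt
      exact hcc (Fin.ext (by omega))
    omega


/-- For `n ≥ 2`, the graph `K_{2,n}` admits an equitable proper `k`-coloring
for every `k ≥ ⌈n/3⌉ + 1` (note `⌈n/3⌉ = (n+2)/3` in natural division), has no equitable
proper coloring with exactly `⌈n/3⌉` colors, and hence its equitable chromatic threshold
is `⌈n/3⌉ + 1`. -/
theorem K2n_equitable_chromatic_threshold (n : ℕ) (hn : 2 ≤ n) :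
    (∀ k : ℕ, (n + 2) / 3 + 1 ≤ k →
      ∃ f : Fin 2 ⊕ Fin n → Fin k,
        (∀ u v, (completeBipartiteGraph (Fin 2) (Fin n)).Adj u v → f u ≠ f v) ∧
        (∀ i j : Fin k,
          (univ.filter fun v => f v = i).card ≤ (univ.filter fun v => f v = j).card + 1)) ∧
    (¬ ∃ f : Fin 2 ⊕ Fin n → Fin ((n + 2) / 3),
        (∀ u v, (completeBipartiteGraph (Fin 2) (Fin n)).Adj u v → f u ≠ f v) ∧
        (∀ i j : Fin ((n + 2) / 3),
          (univ.filter fun v => f v = i).card ≤ (univ.filter fun v => f v = j).card + 1)) ∧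
    IsLeast {m : ℕ | ∀ k : ℕ, m ≤ k →
      ∃ f : Fin 2 ⊕ Fin n → Fin k,
        (∀ u v, (completeBipartiteGraph (Fin 2) (Fin n)).Adj u v → f u ≠ f v) ∧
        (∀ i j : Fin k,
          (univ.filter fun v => f v = i).card ≤ (univ.filter fun v => f v = j).card + 1)}
      ((n + 2) / 3 + 1) := by
  have hA := partA n hn
  have hB := partB n hn
  refine ⟨hA, hB, hA, ?_⟩
  intro m' hm'
  by_contra hlt
  push_neg at hlt
  exact hB (hm' ((n + 2) / 3) (by omega))
end

section
/- Let G be a graph with two vertex-disjoint subgraphs H and H' whose union is G and with no edges between them. If both H and H' admit equitable proper m-colorings, then G admits an equitable proper m-coloring. (One sorts the color classes of H in nonincreasing order of size, the color classes of H' in nondecreasing order of size, and matches them up.) -/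
open Finset

lemma card_filter_sum {α β : Type*} [Fintype α] [Fintype β]
    (p : α ⊕ β → Prop) [DecidablePred p] :
    (univ.filter p).card
      = (univ.filter fun a => p (Sum.inl a)).card
        + (univ.filter fun b => p (Sum.inr b)).card := by
  rw [← Finset.univ_disjSum_univ]
  have : (Finset.univ.disjSum Finset.univ).filter p
      = (univ.filter fun a => p (Sum.inl a)).disjSum (univ.filter fun b => p (Sum.inr b)) := by
    ext x
    cases x <;> simp
  rw [this, Finset.card_disjSum]

lemma key_sum {m : ℕ} (a b : Fin m → ℕ) (ha : Monotone a) (hb : Antitone b)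
    (ha' : ∀ i j, a i ≤ a j + 1) (hb' : ∀ i j, b i ≤ b j + 1) :
    ∀ i j, a i + b i ≤ a j + b j + 1 := by
  intro i j
  rcases le_total i j with h | h
  · have := ha h
    have := hb' i j
    omega
  · have := hb h
    have := ha' i j
    omega

/-- If `G` is the disjoint union of `H` and `H'` (vertex set `α ⊕ β`, no edges
between the two sides), and both restrictions admit equitable proper `m`-colorings, then so
does `G`. -/
theorem equitable_coloring_of_disjoint_union {α β : Type*} [Fintype α] [Fintype β]
    [DecidableEq α] [DecidableEq β]
    (G : SimpleGraph (α ⊕ β)) (hsep : ∀ (a : α) (b : β), ¬ G.Adj (Sum.inl a) (Sum.inr b))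
    (m : ℕ)
    (hH : ∃ f : α → Fin m,
      (∀ u v : α, G.Adj (Sum.inl u) (Sum.inl v) → f u ≠ f v) ∧
      (∀ i j : Fin m,
        (univ.filter fun v => f v = i).card ≤ (univ.filter fun v => f v = j).card + 1))
    (hH' : ∃ f : β → Fin m,
      (∀ u v : β, G.Adj (Sum.inr u) (Sum.inr v) → f u ≠ f v) ∧
      (∀ i j : Fin m,
        (univ.filter fun v => f v = i).card ≤ (univ.filter fun v => f v = j).card + 1)) :
    ∃ f : α ⊕ β → Fin m,
      (∀ u v, G.Adj u v → f u ≠ f v) ∧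
      (∀ i j : Fin m,
        (univ.filter fun v => f v = i).card ≤ (univ.filter fun v => f v = j).card + 1) := by
  obtain ⟨f, hf, hfe⟩ := hH
  obtain ⟨f', hf', hfe'⟩ := hH'
  -- class size functions
  set a : Fin m → ℕ := fun i => (univ.filter fun v : α => f v = i).card with ha_def
  set b : Fin m → ℕ := fun i => (univ.filter fun v : β => f' v = i).card with hb_def
  -- sorting permutations
  set σ : Equiv.Perm (Fin m) := Tuple.sort a with hσ
  set ρ : Equiv.Perm (Fin m) := Fin.revPerm.trans (Tuple.sort b) with hρ
  have hmono : Monotone (a ∘ σ) := Tuple.monotone_sort a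
  have hanti : Antitone (b ∘ ρ) := by
    intro i j hij
    exact Tuple.monotone_sort b (Fin.rev_le_rev.mpr hij)
  -- the combined coloring
  refine ⟨Sum.elim (fun v => σ.symm (f v)) (fun v => ρ.symm (f' v)), ?_, ?_⟩
  · rintro (u | u) (v | v) h <;> simp only [Sum.elim_inl, Sum.elim_inr]
    · exact fun he => hf u v h (σ.symm.injective he)
    · exact absurd h (hsep u v)
    · exact absurd h.symm (hsep v u)
    · exact fun he => hf' u v h (ρ.symm.injective he)
  · intro i j
    have hcard : ∀ k : Fin m,
        ((univ : Finset (α ⊕ β)).filter fun v =>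
          Sum.elim (fun w => σ.symm (f w)) (fun w => ρ.symm (f' w)) v = k).card
          = a (σ k) + b (ρ k) := by
      intro k
      rw [card_filter_sum]
      congr 1
      · apply Finset.card_bij' (fun x _ => x) (fun x _ => x) <;>
          simp [Equiv.symm_apply_eq]
      · apply Finset.card_bij' (fun x _ => x) (fun x _ => x) <;>
          simp [Equiv.symm_apply_eq]
    rw [hcard i, hcard j]
    exact key_sum (a ∘ σ) (b ∘ ρ) hmono hanti
      (fun i j => hfe (σ i) (σ j)) (fun i j => hfe' (ρ i) (ρ j)) i j
end

section
/- If a_1 ≥ a_2 ≥ … ≥ a_m and b_1 ≤ b_2 ≤ … ≤ b_m are sequences of natural numbers with a_1 − a_m ≤ 1 and b_m − b_1 ≤ 1, then the sequence (a_1 + b_1, a_2 + b_2, …, a_m + b_m) satisfies max_i (a_i + b_i) − min_i (a_i + b_i) ≤ 1. -/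
/-- If `a` is nonincreasing with `a 0 − a last ≤ 1` and `b` is nondecreasing
with `b last − b 0 ≤ 1`, then the componentwise sums pairwise differ by at most one. -/
theorem sum_of_sorted_sequences_equitable (m : ℕ) (a b : Fin (m + 1) → ℕ)
    (ha : Antitone a) (hb : Monotone b)
    (ha1 : a 0 ≤ a (Fin.last m) + 1) (hb1 : b (Fin.last m) ≤ b 0 + 1) :
    ∀ i j : Fin (m + 1), a i + b i ≤ a j + b j + 1 := by
  intro i j
  rcases le_total i j with h | h
  · have h1 : a i ≤ a j + 1 :=
      le_trans (ha (Fin.zero_le i)) (le_trans ha1 (by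
        have := ha (Fin.le_last j); omega))
    have h2 : b i ≤ b j := hb h
    omega
  · have h1 : a i ≤ a j := ha h
    have h2 : b i ≤ b j + 1 :=
      le_trans (hb (Fin.le_last i)) (le_trans hb1 (by
        have := hb (Fin.zero_le j); omega))
    omega
end

section
/- Let m ≥ 3 and let P = y_0 y_1 … y_t y_{t+1} be a path with t ∈ {4,5} internal vertices, where y_0 and y_{t+1} have fixed colors c_0 and c_{t+1} in {1,…,m} (not necessarily distinct). Suppose m ≥ t. Then for any internal vertex x = y_i (1 ≤ i ≤ t) and any two forbidden colors a, b ∈ {1,…,m}, there is an assignment of t pairwise distinct colors from {1,…,t} ⊆ {1,…,m} to y_1,…,y_t such that adjacent vertices on P (including the endpoints with their fixed colors) receive different colors and the color of x is not in {a,b}. -/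
lemma perm2 {α : Type*} [DecidableEq α] {p1 p2 v1 v2 : α} (hp : p1 ≠ p2) (hv : v1 ≠ v2) :
    ∃ σ : Equiv.Perm α, σ p1 = v1 ∧ σ p2 = v2 := by
  have hq2v1 : Equiv.swap p1 v1 p2 ≠ v1 := by
    intro h
    apply hp
    have h2 := congrArg (Equiv.swap p1 v1) h
    rwa [Equiv.swap_apply_self, Equiv.swap_apply_right, eq_comm] at h2
  refine ⟨Equiv.swap (Equiv.swap p1 v1 p2) v2 * Equiv.swap p1 v1, ?_, ?_⟩
  · simp only [Equiv.Perm.mul_apply, Equiv.swap_apply_left]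
    exact Equiv.swap_apply_of_ne_of_ne hq2v1.symm hv
  · simp only [Equiv.Perm.mul_apply, Equiv.swap_apply_left]

lemma perm3 {α : Type*} [DecidableEq α] {p1 p2 p3 v1 v2 v3 : α} (hp12 : p1 ≠ p2)
    (hp13 : p1 ≠ p3) (hp23 : p2 ≠ p3) (hv12 : v1 ≠ v2) (hv13 : v1 ≠ v3) (hv23 : v2 ≠ v3) :
    ∃ σ : Equiv.Perm α, σ p1 = v1 ∧ σ p2 = v2 ∧ σ p3 = v3 := by
  obtain ⟨τ, hτ1, hτ2⟩ := perm2 hp12 hv12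
  have hq3v1 : τ p3 ≠ v1 := fun h => hp13 (τ.injective (hτ1.trans h.symm))
  have hq3v2 : τ p3 ≠ v2 := fun h => hp23 (τ.injective (hτ2.trans h.symm))
  refine ⟨Equiv.swap (τ p3) v3 * τ, ?_, ?_, ?_⟩
  · simp only [Equiv.Perm.mul_apply, hτ1]
    exact Equiv.swap_apply_of_ne_of_ne hq3v1.symm hv13
  · simp only [Equiv.Perm.mul_apply, hτ2]
    exact Equiv.swap_apply_of_ne_of_ne hq3v2.symm hv23
  · simp only [Equiv.Perm.mul_apply, Equiv.swap_apply_left]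

lemma pick3 (a b : ℕ) : ∃ x, x < 3 ∧ x ≠ a ∧ x ≠ b := by
  by_cases h0 : a = 0 ∨ b = 0
  · by_cases h1 : a = 1 ∨ b = 1
    · exact ⟨2, by omega, by omega, by omega⟩
    · exact ⟨1, by omega, by omega, by omega⟩
  · exact ⟨0, by omega, by omega, by omega⟩

lemma pick4 (a b c : ℕ) : ∃ x, x < 4 ∧ x ≠ a ∧ x ≠ b ∧ x ≠ c := by
  by_cases h0 : a = 0 ∨ b = 0 ∨ c = 0
  · by_cases h1 : a = 1 ∨ b = 1 ∨ c = 1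
    · by_cases h2 : a = 2 ∨ b = 2 ∨ c = 2
      · exact ⟨3, by omega, by omega, by omega, by omega⟩
      · exact ⟨2, by omega, by omega, by omega, by omega⟩
    · exact ⟨1, by omega, by omega, by omega, by omega⟩
  · exact ⟨0, by omega, by omega, by omega, by omega⟩

/-- (Lemma 3.1, case `m ≥ t`.) For a path `y₀ y₁ … y_t y_{t+1}` with
`t ∈ {4,5}`, `m ≥ max(3,t)`, endpoint colors `c₀, c_{t+1}`, a designated internal vertex
`y_{i+1}` (given by `i : Fin t`) and two forbidden colors `a, b`, one can assign `t`
pairwise distinct colors from `{0,…,t−1} ⊆ Fin m` to `y₁,…,y_t` (here `f j` is the color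
of `y_{j+1}`) so that the coloring of the path is proper, and the designated vertex avoids
`a` and `b`. -/
theorem thread_extension_m_ge_t (m t : ℕ) (ht : t = 4 ∨ t = 5) (hm3 : 3 ≤ m) (hmt : t ≤ m)
    (c₀ cend a b : Fin m) (i : Fin t) :
    ∃ f : Fin t → Fin m,
      Function.Injective f ∧
      (∀ j : Fin t, (f j : ℕ) < t) ∧
      f ⟨0, by omega⟩ ≠ c₀ ∧
      f ⟨t - 1, by omega⟩ ≠ cend ∧
      f i ≠ a ∧ f i ≠ b := by
  have ht4 : 4 ≤ t := by omega
  set p1 : Fin t := ⟨0, by omega⟩ with hp1def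
  set p2 : Fin t := ⟨t - 1, by omega⟩ with hp2def
  have hp12 : p1 ≠ p2 := by
    intro h
    have := congrArg Fin.val h
    simp [hp1def, hp2def] at this
    omega
  -- helper to finish given a permutation
  by_cases hi1 : i = p1
  · obtain ⟨x1, hx1lt, hx1a, hx1b, hx1c⟩ := pick4 (a : ℕ) (b : ℕ) (c₀ : ℕ)
    obtain ⟨x2, hx2lt, hx2e, hx2x1⟩ := pick3 (cend : ℕ) x1
    obtain ⟨σ, h1, h2⟩ := perm2 (α := Fin t) (p1 := p1) (p2 := p2)
      (v1 := ⟨x1, by omega⟩) (v2 := ⟨x2, by omega⟩) hp12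
      (by intro h; exact hx2x1 (congrArg Fin.val h).symm)
    refine ⟨fun j => Fin.castLE hmt (σ j), ?_, fun j => (σ j).isLt, ?_, ?_, ?_, ?_⟩
    · exact fun j k h => σ.injective (Fin.castLE_injective hmt h)
    · intro h; exact hx1c (by simpa [h1] using congrArg Fin.val h)
    · intro h; exact hx2e (by simpa [h2] using congrArg Fin.val h)
    · rw [hi1]; intro h; exact hx1a (by simpa [h1] using congrArg Fin.val h)
    · rw [hi1]; intro h; exact hx1b (by simpa [h1] using congrArg Fin.val h)
  · by_cases hi2 : i = p2
    · obtain ⟨x2, hx2lt, hx2a, hx2b, hx2e⟩ := pick4 (a : ℕ) (b : ℕ) (cend : ℕ)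
      obtain ⟨x1, hx1lt, hx1c, hx1x2⟩ := pick3 (c₀ : ℕ) x2
      obtain ⟨σ, h1, h2⟩ := perm2 (α := Fin t) (p1 := p1) (p2 := p2)
        (v1 := ⟨x1, by omega⟩) (v2 := ⟨x2, by omega⟩) hp12
        (by intro h; exact hx1x2 (congrArg Fin.val h))
      refine ⟨fun j => Fin.castLE hmt (σ j), ?_, fun j => (σ j).isLt, ?_, ?_, ?_, ?_⟩
      · exact fun j k h => σ.injective (Fin.castLE_injective hmt h)
      · intro h; exact hx1c (by simpa [h1] using congrArg Fin.val h)
      · intro h; exact hx2e (by simpa [h2] using congrArg Fin.val h)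
      · rw [hi2]; intro h; exact hx2a (by simpa [h2] using congrArg Fin.val h)
      · rw [hi2]; intro h; exact hx2b (by simpa [h2] using congrArg Fin.val h)
    · obtain ⟨x3, hx3lt, hx3a, hx3b⟩ := pick3 (a : ℕ) (b : ℕ)
      obtain ⟨x1, hx1lt, hx1c, hx1x3⟩ := pick3 (c₀ : ℕ) x3
      obtain ⟨x2, hx2lt, hx2e, hx2x3, hx2x1⟩ := pick4 (cend : ℕ) x3 x1
      obtain ⟨σ, h1, h2, h3⟩ := perm3 (α := Fin t) (p1 := p1) (p2 := p2) (p3 := i)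
        (v1 := ⟨x1, by omega⟩) (v2 := ⟨x2, by omega⟩) (v3 := ⟨x3, by omega⟩)
        hp12 (Ne.symm hi1) (Ne.symm hi2)
        (by intro h; exact hx2x1 (congrArg Fin.val h).symm)
        (by intro h; exact hx1x3 (congrArg Fin.val h))
        (by intro h; exact hx2x3 (congrArg Fin.val h))
      refine ⟨fun j => Fin.castLE hmt (σ j), ?_, fun j => (σ j).isLt, ?_, ?_, ?_, ?_⟩
      · exact fun j k h => σ.injective (Fin.castLE_injective hmt h)
      · intro h; exact hx1c (by simpa [h1] using congrArg Fin.val h)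
      · intro h; exact hx2e (by simpa [h2] using congrArg Fin.val h)
      · intro h; exact hx3a (by simpa [h3] using congrArg Fin.val h)
      · intro h; exact hx3b (by simpa [h3] using congrArg Fin.val h)
end

section
/- Let x be a vertex with fixed color c_x ∈ {1,…,m} (m ≥ 3), and let y, z be vertices with fixed colors c_y, c_z such that c_x ∉ {c_y, c_z}. Consider the paths x y_1 y_2 y and x y_3 z (so y_1, y_2, y_3 are new vertices; y_1 and y_3 are adjacent to x). Then one can assign the three colors 1, 2, 3 bijectively to y_2, y_3, y_1 respectively in some order so that the resulting coloring is proper: the color of y_1 differs from c_x and from the color of y_2, the color of y_2 differs from c_y, and the color of y_3 differs from c_x and c_z. -/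
private lemma pick_pair {m : ℕ} (p q cx cy : Fin m) (hpq : p ≠ q) (hxy : cx ≠ cy) :
    ∃ g1 g2 : Fin m, ((g1 = p ∧ g2 = q) ∨ (g1 = q ∧ g2 = p)) ∧ g1 ≠ cx ∧ g2 ≠ cy := by
  by_cases h1 : p = cx
  · exact ⟨q, p, Or.inr ⟨rfl, rfl⟩, fun h => hpq (h.trans h1.symm).symm,
      fun h => hxy (h1 ▸ h)⟩
  · by_cases h2 : q = cx
    · exact ⟨p, q, Or.inl ⟨rfl, rfl⟩, h1, fun h => hxy (h2 ▸ h)⟩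
    · by_cases h3 : q = cy
      · exact ⟨q, p, Or.inr ⟨rfl, rfl⟩, h2, fun h => hpq (h.trans h3.symm)⟩
      · exact ⟨p, q, Or.inl ⟨rfl, rfl⟩, h1, h3⟩

/-- (Lemma 3.3.) Given fixed colors `c_x, c_y, c_z ∈ Fin m` (`m ≥ 3`) with
`c_x ∉ {c_y, c_z}`, the internal vertices of the 2-thread `x y₁ y₂ y` and the 1-thread
`x y₃ z` can be colored bijectively with the three colors `{0,1,2}` (here `g₁, g₂, g₃` are
the colors of `y₁, y₂, y₃`) so that the coloring is proper. -/
theorem two_one_thread_extension (m : ℕ) (hm : 3 ≤ m) (cx cy cz : Fin m)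
    (hxy : cx ≠ cy) (hxz : cx ≠ cz) :
    ∃ g₁ g₂ g₃ : Fin m,
      (g₁ : ℕ) < 3 ∧ (g₂ : ℕ) < 3 ∧ (g₃ : ℕ) < 3 ∧
      g₁ ≠ g₂ ∧ g₁ ≠ g₃ ∧ g₂ ≠ g₃ ∧
      g₁ ≠ cx ∧ g₂ ≠ cy ∧ g₃ ≠ cx ∧ g₃ ≠ cz := by
  have h0 : (0 : ℕ) < m := by omega
  have h1 : (1 : ℕ) < m := by omega
  have h2 : (2 : ℕ) < m := by omega
  set e0 : Fin m := ⟨0, h0⟩ with he0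
  set e1 : Fin m := ⟨1, h1⟩ with he1
  set e2 : Fin m := ⟨2, h2⟩ with he2
  have key : ∀ r p q : Fin m, (r : ℕ) < 3 → (p : ℕ) < 3 → (q : ℕ) < 3 →
      r ≠ p → r ≠ q → p ≠ q → r ≠ cx → r ≠ cz →
      ∃ g₁ g₂ g₃ : Fin m,
        (g₁ : ℕ) < 3 ∧ (g₂ : ℕ) < 3 ∧ (g₃ : ℕ) < 3 ∧
        g₁ ≠ g₂ ∧ g₁ ≠ g₃ ∧ g₂ ≠ g₃ ∧
        g₁ ≠ cx ∧ g₂ ≠ cy ∧ g₃ ≠ cx ∧ g₃ ≠ cz := by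
    intro r p q hr hp hq hrp hrq hpq hrx hrz
    obtain ⟨g1, g2, hor, hg1, hg2⟩ := pick_pair p q cx cy hpq hxy
    rcases hor with ⟨h1', h2'⟩ | ⟨h1', h2'⟩
    · exact ⟨p, q, r, hp, hq, hr, hpq, fun h => hrp h.symm, fun h => hrq h.symm,
        h1' ▸ hg1, h2' ▸ hg2, hrx, hrz⟩
    · exact ⟨q, p, r, hq, hp, hr, hpq.symm, fun h => hrq h.symm, fun h => hrp h.symm,
        h1' ▸ hg1, h2' ▸ hg2, hrx, hrz⟩
  have ne01 : e0 ≠ e1 := by simp [Fin.ext_iff]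
  have ne02 : e0 ≠ e2 := by simp [Fin.ext_iff]
  have ne12 : e1 ≠ e2 := by simp [he1, he2, Fin.ext_iff]
  by_cases hA : cx ≠ e0 ∧ cz ≠ e0
  · exact key e0 e1 e2 (by simp [he0, he1, he2]) (by simp [he0, he1, he2]) (by simp [he0, he1, he2]) ne01 ne02 ne12
      (fun h => hA.1 h.symm) (fun h => hA.2 h.symm)
  · by_cases hB : cx ≠ e1 ∧ cz ≠ e1
    · exact key e1 e0 e2 (by simp [he0, he1, he2]) (by simp [he0, he1, he2]) (by simp [he0, he1, he2]) ne01.symm ne12 ne02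
        (fun h => hB.1 h.symm) (fun h => hB.2 h.symm)
    · push_neg at hA hB
      rcases Classical.em (cx = e0) with hx0 | hx0
      · have hz1 : cz = e1 := by
          rcases Classical.em (cx = e1) with h | h
          · exact absurd (hx0.symm.trans h) ne01
          · exact hB h
        refine key e2 e0 e1 (by simp [he0, he1, he2]) (by simp [he0, he1, he2]) (by simp [he0, he1, he2]) ne02.symm ne12.symm ne01 ?_ ?_
        · rw [hx0]; exact ne02.symm
        · rw [hz1]; exact ne12.symm
      · have hz0 : cz = e0 := hA hx0
        have hx1 : cx = e1 := by
          rcases Classical.em (cz = e1) with h | h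
          · exact absurd (hz0.symm.trans h) ne01
          · rcases Classical.em (cx = e1) with h' | h'
            · exact h'
            · exact absurd (hB h') h
        refine key e2 e0 e1 (by simp [he0, he1, he2]) (by simp [he0, he1, he2]) (by simp [he0, he1, he2]) ne02.symm ne12.symm ne01 ?_ ?_
        · rw [hx1]; exact ne12.symm
        · rw [hz0]; exact ne02.symm
end
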